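/- Let C : [0,1] → ℝ² be 1-Lipschitz, let 0 ≤ x₁ ≤ x₂ ≤ x₃ ≤ x₄ ≤ 1, and let 0 < ε/2 < d. If closest-possible(x₁,x₂) ≤ d, closest-possible(x₃,x₄) ≤ d, and ‖C(x₂)‖ > d + ε/2, then closest-possible(x₁,x₄) < d − ε/2. -/

import Mathlib

noncomputable def closestPossible (C : ℝ → EuclideanSpace ℝ (Fin 2)) (a b : ℝ) : ℝ :=
  sInf ((fun p => ‖p‖) '' {p : EuclideanSpace ℝ (Fin 2) | ‖C a - p‖ + ‖C b - p‖ ≤ b - a})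

lemma aux_shrink (f w : EuclideanSpace ℝ (Fin 2)) (t : ℝ)
    (hw : 0 < ‖w‖) (ht0 : 0 ≤ t) (htr : t ≤ ‖w‖) (hf : 2 * ‖f‖ ≤ ‖w‖ + t) :
    ‖f - (t / ‖w‖) • w‖ ≤ ‖f - w‖ := by
  have hs0 : 0 ≤ t / ‖w‖ := div_nonneg ht0 hw.le
  have hs1 : t / ‖w‖ ≤ 1 := div_le_one_of_le₀ htr hw.le
  have hst : t / ‖w‖ * ‖w‖ = t := div_mul_cancel₀ t hw.ne'
  have hip : inner ℝ f w ≤ ‖f‖ * ‖w‖ := real_inner_le_norm f w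
  have hfn : 0 ≤ ‖f‖ := norm_nonneg f
  have hsq : ‖f - (t / ‖w‖) • w‖ ^ 2 ≤ ‖f - w‖ ^ 2 := by
    rw [norm_sub_sq_real, norm_sub_sq_real, real_inner_smul_right, norm_smul,
      Real.norm_eq_abs, abs_of_nonneg hs0]
    nlinarith [mul_le_mul_of_nonneg_right hip (sub_nonneg.mpr hs1),
      mul_le_mul_of_nonneg_left htr ht0, sq_nonneg (t / ‖w‖ * ‖w‖ - t)]
  nlinarith [norm_nonneg (f - (t / ‖w‖) • w), norm_nonneg (f - w)]

theorem stmt_5 (C : ℝ → EuclideanSpace ℝ (Fin 2))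
    (hC : ∀ a ∈ Set.Icc (0:ℝ) 1, ∀ b ∈ Set.Icc (0:ℝ) 1, ‖C a - C b‖ ≤ |a - b|)
    (x₁ x₂ x₃ x₄ : ℝ) (h0 : 0 ≤ x₁) (h1 : x₁ ≤ x₂) (h2 : x₂ ≤ x₃)
    (h3 : x₃ ≤ x₄) (h4 : x₄ ≤ 1)
    (ε d : ℝ) (hε : 0 < ε / 2) (hεd : ε / 2 < d)
    (hcp1 : closestPossible C x₁ x₂ ≤ d) (hcp2 : closestPossible C x₃ x₄ ≤ d)
    (hx2 : ‖C x₂‖ > d + ε / 2) :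
    closestPossible C x₁ x₄ < d - ε / 2 := by
  have hm1 : x₁ ∈ Set.Icc (0:ℝ) 1 := ⟨h0, by linarith⟩
  have hm2 : x₂ ∈ Set.Icc (0:ℝ) 1 := ⟨by linarith, by linarith⟩
  have hm3 : x₃ ∈ Set.Icc (0:ℝ) 1 := ⟨by linarith, by linarith⟩
  have hm4 : x₄ ∈ Set.Icc (0:ℝ) 1 := ⟨by linarith, by linarith⟩
  set r := ‖C x₂‖ with hr
  have hrpos : 0 < r := by linarith
  set η := r - d - ε / 2 with hη
  have hηpos : 0 < η := by simp [hη]; linarith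
  set δ := η / 4 with hδ
  have hδpos : 0 < δ := by positivity
  -- the sets
  set S₁ := {p : EuclideanSpace ℝ (Fin 2) | ‖C x₁ - p‖ + ‖C x₂ - p‖ ≤ x₂ - x₁} with hS₁
  set S₂ := {p : EuclideanSpace ℝ (Fin 2) | ‖C x₃ - p‖ + ‖C x₄ - p‖ ≤ x₄ - x₃} with hS₂
  set S₄ := {p : EuclideanSpace ℝ (Fin 2) | ‖C x₁ - p‖ + ‖C x₄ - p‖ ≤ x₄ - x₁} with hS₄
  have hC12 : ‖C x₁ - C x₂‖ ≤ x₂ - x₁ := by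
    have := hC x₁ hm1 x₂ hm2
    rwa [abs_of_nonpos (by linarith), neg_sub] at this
  have hC34 : ‖C x₃ - C x₄‖ ≤ x₄ - x₃ := by
    have := hC x₃ hm3 x₄ hm4
    rwa [abs_of_nonpos (by linarith), neg_sub] at this
  have hC32 : ‖C x₃ - C x₂‖ ≤ x₃ - x₂ := by
    have := hC x₃ hm3 x₂ hm2
    rwa [abs_of_nonneg (by linarith)] at this
  have hne₁ : ((fun p : EuclideanSpace ℝ (Fin 2) => ‖p‖) '' S₁).Nonempty :=
    ⟨‖C x₂‖, C x₂, by simpa [hS₁] using hC12, rfl⟩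
  have hne₂ : ((fun p : EuclideanSpace ℝ (Fin 2) => ‖p‖) '' S₂).Nonempty :=
    ⟨‖C x₄‖, C x₄, by simpa [hS₂] using hC34, rfl⟩
  have hbdd : ∀ s : Set (EuclideanSpace ℝ (Fin 2)),
      BddBelow ((fun p : EuclideanSpace ℝ (Fin 2) => ‖p‖) '' s) := by
    intro s
    exact ⟨0, by rintro y ⟨p, -, rfl⟩; exact norm_nonneg p⟩
  -- extract near-optimal points
  have h₁' : sInf ((fun p : EuclideanSpace ℝ (Fin 2) => ‖p‖) '' S₁) < d + δ :=
    lt_of_le_of_lt hcp1 (by linarith)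
  have h₂' : sInf ((fun p : EuclideanSpace ℝ (Fin 2) => ‖p‖) '' S₂) < d + δ :=
    lt_of_le_of_lt hcp2 (by linarith)
  obtain ⟨y₁, hy₁, hy₁lt⟩ := exists_lt_of_csInf_lt hne₁ h₁'
  obtain ⟨p₁, hp₁S, rfl⟩ := hy₁
  obtain ⟨y₂, hy₂, hy₂lt⟩ := exists_lt_of_csInf_lt hne₂ h₂'
  obtain ⟨p₂, hp₂S, rfl⟩ := hy₂
  -- the candidate point
  set t := max (2 * (d + δ) - r) 0 with ht
  have ht0 : 0 ≤ t := le_max_right _ _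
  have htr : t ≤ r := by
    apply max_le _ hrpos.le
    have : δ ≤ ε / 2 + η := by simp [hδ]; linarith
    linarith [hx2]
  set z₀ := (t / r) • C x₂ with hz₀
  have hz₀norm : ‖z₀‖ = t := by
    rw [hz₀, norm_smul, Real.norm_eq_abs, abs_of_nonneg (div_nonneg ht0 hrpos.le), ← hr,
      div_mul_cancel₀ t hrpos.ne']
  have haux1 : ‖p₁ - z₀‖ ≤ ‖p₁ - C x₂‖ :=
    aux_shrink p₁ (C x₂) t hrpos ht0 htr (by
      have : 2 * (d + δ) - r ≤ t := le_max_left _ _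
      linarith [hy₁lt])
  have haux2 : ‖p₂ - z₀‖ ≤ ‖p₂ - C x₂‖ :=
    aux_shrink p₂ (C x₂) t hrpos ht0 htr (by
      have : 2 * (d + δ) - r ≤ t := le_max_left _ _
      linarith [hy₂lt])
  -- z₀ ∈ S₄
  have hmemz : z₀ ∈ S₄ := by
    have t1 : ‖C x₁ - z₀‖ ≤ ‖C x₁ - p₁‖ + ‖p₁ - z₀‖ := norm_sub_le_norm_sub_add_norm_sub _ _ _
    have t2 : ‖C x₄ - z₀‖ ≤ ‖C x₄ - p₂‖ + ‖p₂ - z₀‖ := norm_sub_le_norm_sub_add_norm_sub _ _ _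
    have t3 : ‖p₂ - C x₂‖ ≤ ‖p₂ - C x₃‖ + ‖C x₃ - C x₂‖ := norm_sub_le_norm_sub_add_norm_sub _ _ _
    have e1 : ‖p₁ - C x₂‖ = ‖C x₂ - p₁‖ := norm_sub_rev _ _
    have e2 : ‖p₂ - C x₃‖ = ‖C x₃ - p₂‖ := norm_sub_rev _ _
    have hp₁S' : ‖C x₁ - p₁‖ + ‖C x₂ - p₁‖ ≤ x₂ - x₁ := hp₁S
    have hp₂S' : ‖C x₃ - p₂‖ + ‖C x₄ - p₂‖ ≤ x₄ - x₃ := hp₂S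
    show ‖C x₁ - z₀‖ + ‖C x₄ - z₀‖ ≤ x₄ - x₁
    linarith [haux1, haux2]
  -- conclude
  have hfin : closestPossible C x₁ x₄ ≤ t := by
    have := csInf_le (hbdd S₄) (⟨z₀, hmemz, hz₀norm⟩ :
      t ∈ (fun p : EuclideanSpace ℝ (Fin 2) => ‖p‖) '' S₄)
    exact this
  have htlt : t < d - ε / 2 := by
    apply max_lt _ (by linarith)
    linarith
  linarith
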